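/- Lemma 2(1): Let |φ⟩ = Σ_{i=0}^{d-1} √μᵢ |i_A i_B⟩ be a bipartite pure state in Schmidt form, with d = min(d_A, d_B), μᵢ ≥ 0, Σᵢμᵢ = 1. Then ‖M_{α,β}^l(|φ⟩⟨φ|)‖_tr ≤ √((lα²+1)(lβ²+1)) + 2 Σ_{0≤i<j≤d-1} √(μᵢμⱼ). -/

import Mathlib

open Matrix
open scoped Kronecker ComplexOrder

/-- Column-stacking vectorization: `vec A (j, i) = A i j`. -/
def vec {m n : Type*} (A : Matrix m n ℂ) : n × m → ℂ := fun p => A p.2 p.1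

/-- The realignment map across the bipartition `A | B`. -/
def realign {A B : Type*} (ρ : Matrix (A × B) (A × B) ℂ) :
    Matrix (A × A) (B × B) ℂ :=
  Matrix.of fun r c => ρ (r.2, c.2) (r.1, c.1)

/-- Partial trace over the first tensor factor. -/
noncomputable def ptrA {A B : Type*} [Fintype A] (ρ : Matrix (A × B) (A × B) ℂ) :
    Matrix B B ℂ :=
  Matrix.of fun i j => ∑ k, ρ (k, i) (k, j)

/-- Partial trace over the second tensor factor. -/
noncomputable def ptrB {A B : Type*} [Fintype B] (ρ : Matrix (A × B) (A × B) ℂ) :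
    Matrix A A ℂ :=
  Matrix.of fun i j => ∑ k, ρ (i, k) (j, k)

/-- The positive semidefinite square root of a positive semidefinite matrix
(the definition of `Matrix.PosSemidef.sqrt` in the older Mathlib). -/
noncomputable def posSemidefSqrt {n 𝕜 : Type*} [Fintype n] [RCLike 𝕜] [DecidableEq n]
    {A : Matrix n n 𝕜} (hA : A.PosSemidef) : Matrix n n 𝕜 :=
  hA.1.eigenvectorUnitary.1 * diagonal ((↑) ∘ (√·) ∘ hA.1.eigenvalues) *
  (star hA.1.eigenvectorUnitary : Matrix n n 𝕜)

/-- The trace norm `‖A‖_tr = tr √(Aᴴ A)`, i.e. the sum of singular values. -/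
noncomputable def traceNorm {m n : Type*} [Fintype m] [Fintype n] [DecidableEq n]
    (A : Matrix m n ℂ) : ℝ :=
  ((posSemidefSqrt (Matrix.posSemidef_conjTranspose_mul_self A)).trace).re

/-- The matrix `M_{α,β}^l(ρ) = [[αβ E_{l×l}, α ω_l(tr_A ρ)ᵀ],
[β ω_l(tr_B ρ), R(ρ)]]`. -/
noncomputable def Mblock (α β : ℝ) (l : ℕ) {A B : Type*} [Fintype A] [Fintype B]
    (ρ : Matrix (A × B) (A × B) ℂ) :
    Matrix (Fin l ⊕ A × A) (Fin l ⊕ B × B) ℂ :=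
  Matrix.fromBlocks
    (Matrix.of fun _ _ => ((α * β : ℝ) : ℂ))
    (Matrix.of fun _ c => (α : ℂ) * _root_.vec (ptrA ρ) c)
    (Matrix.of fun r _ => (β : ℂ) * _root_.vec (ptrB ρ) r)
    (realign ρ)

/-! ### Auxiliary lemmas on the trace norm -/

set_option linter.unusedSectionVars false
set_option maxHeartbeats 1000000

section TraceNormHelpers

variable {m n : Type*} [Fintype m] [Fintype n] [DecidableEq n]

/-- Euclidean norm of a complex vector. -/
noncomputable def cn {m : Type*} [Fintype m] (x : m → ℂ) : ℝ :=
  ‖(WithLp.equiv 2 (m → ℂ)).symm x‖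

lemma inner_equiv_symm_aux {m : Type*} [Fintype m] (x y : m → ℂ) :
    inner ℂ ((WithLp.equiv 2 (m → ℂ)).symm x) ((WithLp.equiv 2 (m → ℂ)).symm y)
      = dotProduct (star x) y := by
  rw [dotProduct_comm]; rfl

lemma psd_eq_sqrt_of_sq_eq {n : Type*} [Fintype n] [DecidableEq n] {A B : Matrix n n ℂ}
    (hA : A.PosSemidef) (hB : B.PosSemidef) (h : A ^ 2 = B) : A = posSemidefSqrt hB := by
  open scoped MatrixOrder in
  have e : posSemidefSqrt hB = CFC.sqrt B := by
    rw [CFC.sqrt_eq_real_sqrt B hB.nonneg, cfcₙ_eq_cfc, hB.1.cfc_eq]; rfl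
  rw [e]
  open scoped MatrixOrder in
  exact (CFC.sqrt_unique (by rw [← sq]; exact h) hA.nonneg).symm

lemma star_mul_self_mul_eq_diagonal' {n : Type*} [Fintype n] [DecidableEq n] {A : Matrix n n ℂ}
    (hA : A.IsHermitian) : star (hA.eigenvectorUnitary : Matrix n n ℂ) * A
      * (hA.eigenvectorUnitary : Matrix n n ℂ) = diagonal (RCLike.ofReal ∘ hA.eigenvalues) := by
  have := hA.conjStarAlgAut_star_eigenvectorUnitary
  simpa using this

lemma cn_nonneg (x : m → ℂ) : 0 ≤ cn x := norm_nonneg _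

lemma cn_smul (c : ℂ) (x : m → ℂ) : cn (c • x) = ‖c‖ * cn x := by
  rw [cn, cn, WithLp.equiv_symm_apply, WithLp.toLp_smul, norm_smul]

lemma dot_self_eq (x : m → ℂ) : dotProduct (star x) x = ((cn x ^ 2 : ℝ) : ℂ) := by
  rw [← inner_equiv_symm_aux x x, inner_self_eq_norm_sq_to_K]
  simp only [cn]
  norm_cast

lemma dot_self_re (x : m → ℂ) : (dotProduct (star x) x).re = cn x ^ 2 := by
  rw [dot_self_eq]; norm_cast

lemma sqrt_dot_self (x : m → ℂ) : Real.sqrt (dotProduct (star x) x).re = cn x := by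
  rw [dot_self_re, Real.sqrt_sq (cn_nonneg x)]

lemma cn_eq_sqrt_dot (x : m → ℂ) : cn x = Real.sqrt (dotProduct (star x) x).re :=
  (sqrt_dot_self x).symm

lemma abs_dot_le (x y : m → ℂ) :
    ‖dotProduct (star x) y‖ ≤ cn x * cn y := by
  have h := (inner_equiv_symm_aux x y).symm
  rw [h]
  exact norm_inner_le_norm (𝕜 := ℂ) _ _

lemma cn_eq_zero {x : m → ℂ} : cn x = 0 ↔ x = 0 := by
  rw [cn, norm_eq_zero]
  constructor
  · intro h
    have := congrArg (WithLp.equiv 2 (m → ℂ)) h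
    simpa using this
  · rintro rfl; simp

lemma conjTranspose_mul_apply_eq_dot (P : Matrix m n ℂ) (Q : Matrix m n ℂ) (j j' : n) :
    (Pᴴ * Q) j j' = dotProduct (star fun i => P i j) (fun i => Q i j') := by
  simp [Matrix.mul_apply, Matrix.conjTranspose_apply, dotProduct]

lemma sqrt_ne_zero' {l : ℝ} (h0 : 0 ≤ l) (h : l ≠ 0) : Real.sqrt l ≠ 0 :=
  ne_of_gt (Real.sqrt_pos.mpr (lt_of_le_of_ne h0 (Ne.symm h)))

lemma inv_sqrt_mul (l : ℝ) (h0 : 0 ≤ l) (h : l ≠ 0) : (Real.sqrt l)⁻¹ * l = Real.sqrt l := by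
  rw [inv_mul_eq_div, div_eq_iff (sqrt_ne_zero' h0 h), Real.mul_self_sqrt h0]

lemma inv_sqrt_mul2 (l : ℝ) (h0 : 0 ≤ l) (h : l ≠ 0) :
    (Real.sqrt l)⁻¹ * (l * (Real.sqrt l)⁻¹) = 1 := by
  rw [← mul_assoc, inv_sqrt_mul l h0 h, mul_inv_cancel₀ (sqrt_ne_zero' h0 h)]

lemma re_diag_nonneg {M : Matrix n n ℂ} (hM : M.PosSemidef) (j : n) : 0 ≤ (M j j).re := by
  have h := hM.re_dotProduct_nonneg (Pi.single j 1)
  simpa [dotProduct, Matrix.mulVec, Pi.single_apply, Finset.mul_sum] using h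

lemma traceNorm_eq_sum (A : Matrix m n ℂ) :
    traceNorm A
      = ∑ i, Real.sqrt ((Matrix.posSemidef_conjTranspose_mul_self A).1.eigenvalues i) := by
  set hP := Matrix.posSemidef_conjTranspose_mul_self A
  have hVu : (hP.1.eigenvectorUnitary : Matrix n n ℂ)
      * star (hP.1.eigenvectorUnitary : Matrix n n ℂ) = 1 :=
    (Matrix.mem_unitaryGroup_iff).mp hP.1.eigenvectorUnitary.2
  rw [traceNorm, posSemidefSqrt, Matrix.trace_mul_cycle]
  rw [show (star hP.1.eigenvectorUnitary : Matrix n n ℂ) * hP.1.eigenvectorUnitary.1 = 1 from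
    mul_eq_one_comm.mp hVu]
  rw [one_mul, Matrix.trace_diagonal]
  simp

lemma conjTranspose_mul_eigen (A : Matrix m n ℂ) :
    (A * ((Matrix.posSemidef_conjTranspose_mul_self A).1.eigenvectorUnitary : Matrix n n ℂ))ᴴ
      * (A * ((Matrix.posSemidef_conjTranspose_mul_self A).1.eigenvectorUnitary : Matrix n n ℂ))
      = diagonal (RCLike.ofReal ∘ (Matrix.posSemidef_conjTranspose_mul_self A).1.eigenvalues) := by
  have h := star_mul_self_mul_eq_diagonal' (Matrix.posSemidef_conjTranspose_mul_self A).1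
  rw [Matrix.star_eq_conjTranspose] at h
  rw [Matrix.conjTranspose_mul, ← h]
  simp only [Matrix.mul_assoc]

lemma conjTranspose_mul_eigen' (A : Matrix m n ℂ) :
    (A * ((Matrix.posSemidef_conjTranspose_mul_self A).1.eigenvectorUnitary : Matrix n n ℂ))ᴴ
      * (A * ((Matrix.posSemidef_conjTranspose_mul_self A).1.eigenvectorUnitary : Matrix n n ℂ))
      = diagonal (fun i =>
          (((Matrix.posSemidef_conjTranspose_mul_self A).1.eigenvalues i : ℝ) : ℂ)) :=
  conjTranspose_mul_eigen A

/-- Duality bound: if `1 - XᴴX ⪰ 0` then `re tr(Xᴴ A) ≤ ‖A‖_tr`. -/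
lemma re_trace_le_traceNorm (X A : Matrix m n ℂ) (hX : Matrix.PosSemidef (1 - Xᴴ * X)) :
    (Matrix.trace (Xᴴ * A)).re ≤ traceNorm A := by
  classical
  set hP := Matrix.posSemidef_conjTranspose_mul_self A with hPdef
  set lam : n → ℝ := hP.1.eigenvalues with hlam
  set V : Matrix n n ℂ := (hP.1.eigenvectorUnitary : Matrix n n ℂ) with hVdef
  have hVu : V * Vᴴ = 1 := by
    rw [← Matrix.star_eq_conjTranspose]
    exact (Matrix.mem_unitaryGroup_iff).mp hP.1.eigenvectorUnitary.2
  have hVu' : Vᴴ * V = 1 := mul_eq_one_comm.mp hVu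
  have hMM : (A * V)ᴴ * (A * V) = diagonal (RCLike.ofReal ∘ lam) := conjTranspose_mul_eigen A
  have h1 : (X * V)ᴴ * (A * V) = Vᴴ * (Xᴴ * A * V) := by
    rw [Matrix.conjTranspose_mul X V]
    simp only [Matrix.mul_assoc]
  have htr : Matrix.trace ((X * V)ᴴ * (A * V)) = Matrix.trace (Xᴴ * A) := by
    rw [h1, Matrix.trace_mul_comm, Matrix.mul_assoc, hVu, Matrix.mul_one]
  have hGG : (X * V)ᴴ * (X * V) = Vᴴ * (Xᴴ * X * V) := by
    rw [Matrix.conjTranspose_mul X V]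
    simp only [Matrix.mul_assoc]
  have hpsd : Matrix.PosSemidef (1 - (X * V)ᴴ * (X * V)) := by
    have h2 := hX.conjTranspose_mul_mul_same V
    have heq : Vᴴ * (1 - Xᴴ * X) * V = 1 - (X * V)ᴴ * (X * V) := by
      rw [Matrix.mul_sub, Matrix.mul_one, Matrix.sub_mul, hVu', hGG, Matrix.mul_assoc]
    rwa [heq] at h2
  have hcolG : ∀ j, cn (fun i => (X * V) i j) ≤ 1 := by
    intro j
    rw [← sqrt_dot_self, ← conjTranspose_mul_apply_eq_dot (X * V) (X * V) j j]
    have h3 := re_diag_nonneg hpsd j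
    have h4 : ((1 - (X * V)ᴴ * (X * V) : Matrix n n ℂ) j j).re
        = 1 - (((X * V)ᴴ * (X * V)) j j).re := by
      simp [Matrix.sub_apply, Matrix.one_apply, Complex.sub_re]
    rw [h4] at h3
    calc Real.sqrt (((X * V)ᴴ * (X * V)) j j).re ≤ Real.sqrt 1 :=
          Real.sqrt_le_sqrt (by linarith)
      _ = 1 := Real.sqrt_one
  have hcolM : ∀ j, cn (fun i => (A * V) i j) = Real.sqrt (lam j) := by
    intro j
    rw [← sqrt_dot_self, ← conjTranspose_mul_apply_eq_dot (A * V) (A * V) j j, hMM]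
    simp
  calc (Matrix.trace (Xᴴ * A)).re = ((Matrix.trace ((X * V)ᴴ * (A * V)))).re := by rw [htr]
    _ = ∑ j, (((X * V)ᴴ * (A * V)) j j).re := by
        rw [Matrix.trace, Complex.re_sum]; rfl
    _ ≤ ∑ j, Real.sqrt (lam j) := by
        apply Finset.sum_le_sum
        intro j _
        calc (((X * V)ᴴ * (A * V)) j j).re ≤ ‖((X * V)ᴴ * (A * V)) j j‖ :=
              Complex.re_le_norm _
          _ ≤ cn (fun i => (X * V) i j) * cn (fun i => (A * V) i j) := by
              rw [conjTranspose_mul_apply_eq_dot (X * V) (A * V) j j]; exact abs_dot_le _ _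
          _ ≤ 1 * Real.sqrt (lam j) := by
              rw [hcolM j]
              exact mul_le_mul_of_nonneg_right (hcolG j) (Real.sqrt_nonneg _)
          _ = Real.sqrt (lam j) := one_mul _
    _ = traceNorm A := (traceNorm_eq_sum A).symm

lemma traceNorm_add_le (A B : Matrix m n ℂ) :
    traceNorm (A + B) ≤ traceNorm A + traceNorm B := by
  classical
  set hP := Matrix.posSemidef_conjTranspose_mul_self (A + B) with hPdef
  set lam : n → ℝ := hP.1.eigenvalues with hlam
  have hlam0 : ∀ i, 0 ≤ lam i := hP.eigenvalues_nonneg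
  set V : Matrix n n ℂ := (hP.1.eigenvectorUnitary : Matrix n n ℂ) with hVdef
  have hVu : V * Vᴴ = 1 := by
    rw [← Matrix.star_eq_conjTranspose]
    exact (Matrix.mem_unitaryGroup_iff).mp hP.1.eigenvectorUnitary.2
  have hVu' : Vᴴ * V = 1 := mul_eq_one_comm.mp hVu
  have hMM : ((A + B) * V)ᴴ * ((A + B) * V) = diagonal (fun i => ((lam i : ℝ) : ℂ)) :=
    conjTranspose_mul_eigen' (A + B)
  set c : n → ℂ := fun i => ((if lam i = 0 then 0 else (Real.sqrt (lam i))⁻¹ : ℝ) : ℂ) with hc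
  have hstarc : star c = c := by
    funext i
    simp only [Pi.star_apply, hc, Complex.star_def, Complex.conj_ofReal]
  set X0 : Matrix m n ℂ := (A + B) * V * diagonal c with hX0
  have hXM : X0ᴴ * ((A + B) * V) = diagonal (fun i => ((Real.sqrt (lam i) : ℝ) : ℂ)) := by
    rw [hX0, Matrix.conjTranspose_mul ((A + B) * V) (diagonal c), Matrix.diagonal_conjTranspose,
        hstarc, Matrix.mul_assoc, hMM, Matrix.diagonal_mul_diagonal]
    have hfun : (fun i => c i * ((lam i : ℝ) : ℂ))
        = fun i => ((Real.sqrt (lam i) : ℝ) : ℂ) := by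
      funext i
      simp only [hc]
      by_cases h : lam i = 0
      · rw [if_pos h, h]; simp
      · rw [if_neg h, ← Complex.ofReal_mul, inv_sqrt_mul (lam i) (hlam0 i) h]
    rw [hfun]
  have hXX : X0ᴴ * X0 = diagonal (fun i => (if lam i = 0 then (0:ℂ) else 1)) := by
    rw [hX0, Matrix.conjTranspose_mul ((A + B) * V) (diagonal c), Matrix.diagonal_conjTranspose,
        hstarc, Matrix.mul_assoc, ← Matrix.mul_assoc (((A + B) * V)ᴴ), hMM,
        Matrix.diagonal_mul_diagonal, Matrix.diagonal_mul_diagonal]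
    have hfun : (fun i => c i * (((lam i : ℝ) : ℂ) * c i))
        = fun i => (if lam i = 0 then (0:ℂ) else 1) := by
      funext i
      simp only [hc]
      by_cases h : lam i = 0
      · rw [if_pos h, h]; simp
      · rw [if_neg h, ← Complex.ofReal_mul, ← Complex.ofReal_mul,
            inv_sqrt_mul2 (lam i) (hlam0 i) h, if_neg h, Complex.ofReal_one]
    rw [hfun]
  set X : Matrix m n ℂ := X0 * Vᴴ with hXdef
  have hXA : Matrix.trace (Xᴴ * (A + B)) = ∑ i, ((Real.sqrt (lam i) : ℝ) : ℂ) := by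
    rw [hXdef, Matrix.conjTranspose_mul X0 Vᴴ, Matrix.conjTranspose_conjTranspose,
        Matrix.mul_assoc, Matrix.trace_mul_comm, Matrix.mul_assoc, hXM, Matrix.trace_diagonal]
  have hpsdX : Matrix.PosSemidef (1 - Xᴴ * X) := by
    have h5 : Xᴴ * X = V * (diagonal (fun i => (if lam i = 0 then (0:ℂ) else 1))) * Vᴴ := by
      rw [hXdef, Matrix.conjTranspose_mul X0 Vᴴ, Matrix.conjTranspose_conjTranspose, ← hXX]
      simp only [Matrix.mul_assoc]
    have h9 : V * (diagonal (fun i => (if lam i = 0 then (1:ℂ) else 0))) * Vᴴ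
        + V * (diagonal (fun i => (if lam i = 0 then (0:ℂ) else 1))) * Vᴴ = 1 := by
      rw [← Matrix.add_mul, ← Matrix.mul_add, Matrix.diagonal_add]
      have h8 : (fun i => (if lam i = 0 then (1:ℂ) else 0) + (if lam i = 0 then (0:ℂ) else 1))
          = fun _ => (1:ℂ) := by
        funext i
        by_cases h : lam i = 0 <;> simp [h]
      rw [h8, Matrix.diagonal_one, Matrix.mul_one, hVu]
    have h6 : (1 : Matrix n n ℂ) - Xᴴ * X
        = V * (diagonal (fun i => (if lam i = 0 then (1:ℂ) else 0))) * Vᴴ := by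
      rw [h5, sub_eq_iff_eq_add]
      exact h9.symm
    rw [h6]
    exact Matrix.PosSemidef.mul_mul_conjTranspose_same
      (Matrix.posSemidef_diagonal_iff.mpr fun i => by
        by_cases h : lam i = 0
        · simp only [if_pos h]; exact zero_le_one
        · simp only [if_neg h]; exact le_refl 0) V
  have hXAB : (Matrix.trace (Xᴴ * (A + B))).re = traceNorm (A + B) := by
    rw [hXA, traceNorm_eq_sum, Complex.re_sum]
    simp [hlam]
  have hsplit : Xᴴ * (A + B) = Xᴴ * A + Xᴴ * B := Matrix.mul_add _ _ _
  calc traceNorm (A + B) = (Matrix.trace (Xᴴ * A)).re + (Matrix.trace (Xᴴ * B)).re := by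
        rw [← hXAB, hsplit, Matrix.trace_add, Complex.add_re]
    _ ≤ traceNorm A + traceNorm B :=
        add_le_add (re_trace_le_traceNorm X A hpsdX) (re_trace_le_traceNorm X B hpsdX)

lemma traceNorm_zero : traceNorm (0 : Matrix m n ℂ) = 0 := by
  have h : (0 : Matrix n n ℂ)
      = posSemidefSqrt (Matrix.posSemidef_conjTranspose_mul_self (0 : Matrix m n ℂ)) :=
    psd_eq_sqrt_of_sq_eq Matrix.PosSemidef.zero _ (by simp)
  rw [traceNorm, ← h]
  simp

lemma traceNorm_sum_le {ι : Type*} (s : Finset ι) (f : ι → Matrix m n ℂ) :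
    traceNorm (∑ i ∈ s, f i) ≤ ∑ i ∈ s, traceNorm (f i) := by
  induction s using Finset.cons_induction with
  | empty => simp [traceNorm_zero]
  | cons a s ha ih =>
      rw [Finset.sum_cons, Finset.sum_cons]
      exact le_trans (traceNorm_add_le _ _) (add_le_add_right ih _)

lemma vecMulVec_conjT_mul (x : m → ℂ) (y : n → ℂ) :
    (Matrix.vecMulVec x y)ᴴ * Matrix.vecMulVec x y
      = ((cn x ^ 2 : ℝ) : ℂ) • Matrix.vecMulVec (star y) y := by
  ext j k
  rw [Matrix.mul_apply]
  simp only [Matrix.conjTranspose_apply, Matrix.vecMulVec_apply, Matrix.smul_apply,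
    Pi.star_apply, smul_eq_mul]
  calc ∑ i, star (x i * y j) * (x i * y k)
      = ∑ i, (star (y j) * y k) * (star (x i) * x i) := by
        apply Finset.sum_congr rfl
        intro i _
        simp only [star_mul']
        ring
    _ = (star (y j) * y k) * dotProduct (star x) x := by rw [← Finset.mul_sum]; rfl
    _ = ((cn x ^ 2 : ℝ) : ℂ) * (star (y j) * y k) := by rw [dot_self_eq]; ring

lemma posSemidef_vecMulVec_star (y : n → ℂ) : (Matrix.vecMulVec (star y) y).PosSemidef := by
  rw [Matrix.posSemidef_iff_dotProduct_mulVec]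
  constructor
  · ext j k
    simp only [Matrix.conjTranspose_apply, Matrix.vecMulVec_apply, Pi.star_apply, star_mul',
      star_star]
    ring
  · intro z
    have h : Matrix.vecMulVec (star y) y *ᵥ z
        = dotProduct y z • star y := by
      funext j
      simp only [Matrix.mulVec, Matrix.vecMulVec_apply, dotProduct, Pi.smul_apply,
        Pi.star_apply, smul_eq_mul, Finset.sum_mul, Finset.mul_sum]
      apply Finset.sum_congr rfl
      intro i _
      ring
    rw [h]
    have h2 : dotProduct (star z) (dotProduct y z • star y)
        = dotProduct y z * star (dotProduct y z) := by
      simp only [dotProduct, Pi.smul_apply, Pi.star_apply, smul_eq_mul, star_sum,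
        star_mul']
      rw [Finset.mul_sum]
      apply Finset.sum_congr rfl
      intro i _
      ring
    rw [h2, Complex.star_def, Complex.mul_conj]
    exact Complex.zero_le_real.mpr (Complex.normSq_nonneg _)

lemma posSemidef_smul_real {T : Matrix n n ℂ} (hT : T.PosSemidef) (r : ℝ) (hr : 0 ≤ r) :
    (((r : ℝ) : ℂ) • T).PosSemidef := by
  rw [Matrix.posSemidef_iff_dotProduct_mulVec]
  constructor
  · rw [Matrix.IsHermitian, Matrix.conjTranspose_smul, hT.1.eq]
    congr 1
    simp [Complex.star_def, Complex.conj_ofReal]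
  · intro z
    rw [Matrix.smul_mulVec, dotProduct_smul]
    have h := hT.dotProduct_mulVec_nonneg z
    rw [Complex.le_def] at h ⊢
    constructor
    · simp only [Complex.zero_re, smul_eq_mul, Complex.mul_re, Complex.ofReal_re,
        Complex.ofReal_im, zero_mul, sub_zero]
      have := h.1
      simp only [Complex.zero_re] at this
      nlinarith
    · simp only [Complex.zero_im, smul_eq_mul, Complex.mul_im, Complex.ofReal_re,
        Complex.ofReal_im, zero_mul, add_zero]
      have := h.2
      simp only [Complex.zero_im] at this
      rw [← this]
      ring

lemma vecMulVec_star_sq (y : n → ℂ) :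
    Matrix.vecMulVec (star y) y * Matrix.vecMulVec (star y) y
      = ((cn y ^ 2 : ℝ) : ℂ) • Matrix.vecMulVec (star y) y := by
  ext j k
  rw [Matrix.mul_apply]
  simp only [Matrix.vecMulVec_apply, Matrix.smul_apply, Pi.star_apply, smul_eq_mul]
  calc ∑ i, star (y j) * y i * (star (y i) * y k)
      = ∑ i, (star (y j) * y k) * (star (y i) * y i) := by
        apply Finset.sum_congr rfl
        intro i _
        ring
    _ = (star (y j) * y k) * dotProduct (star y) y := by rw [← Finset.mul_sum]; rfl
    _ = ((cn y ^ 2 : ℝ) : ℂ) * (star (y j) * y k) := by rw [dot_self_eq]; ring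

lemma trace_vecMulVec_star (y : n → ℂ) :
    (Matrix.vecMulVec (star y) y).trace = ((cn y ^ 2 : ℝ) : ℂ) := by
  rw [← dot_self_eq, Matrix.trace, dotProduct]
  apply Finset.sum_congr rfl
  intro i _
  simp [Matrix.diag, Matrix.vecMulVec_apply]

lemma cn_zero : cn (0 : m → ℂ) = 0 := cn_eq_zero.mpr rfl

lemma traceNorm_vecMulVec (x : m → ℂ) (y : n → ℂ) :
    traceNorm (Matrix.vecMulVec x y) = cn x * cn y := by
  by_cases hy : y = 0
  · subst hy
    have h0 : Matrix.vecMulVec x (0 : n → ℂ) = 0 := by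
      ext i j; simp [Matrix.vecMulVec_apply]
    rw [h0, traceNorm_zero, cn_zero, mul_zero]
  · have hcy : cn y ≠ 0 := fun h => hy (cn_eq_zero.mp h)
    have hcfac : 0 ≤ cn x / cn y := div_nonneg (cn_nonneg x) (cn_nonneg y)
    set T := Matrix.vecMulVec (star y) y with hT
    set S := ((cn x / cn y : ℝ) : ℂ) • T with hS
    have hSpsd : S.PosSemidef := posSemidef_smul_real (posSemidef_vecMulVec_star y) _ hcfac
    have hS2 : S ^ 2 = (Matrix.vecMulVec x y)ᴴ * Matrix.vecMulVec x y := by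
      rw [vecMulVec_conjT_mul, pow_two, hS, Matrix.smul_mul, Matrix.mul_smul, hT,
          vecMulVec_star_sq, smul_smul, smul_smul]
      congr 1
      rw [← Complex.ofReal_mul, ← Complex.ofReal_mul]
      congr 1
      field_simp
    have hsqrt := psd_eq_sqrt_of_sq_eq hSpsd (Matrix.posSemidef_conjTranspose_mul_self _) hS2
    rw [traceNorm, ← hsqrt, hS, Matrix.trace_smul, hT, trace_vecMulVec_star]
    simp only [smul_eq_mul, ← Complex.ofReal_mul, Complex.ofReal_re]
    field_simp

/-- Contraction of two Schmidt-type expansions against an orthonormality relation. -/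
lemma schmidt_contract {d : ℕ} {N : Type*} [Fintype N] (f g : Fin d → N → ℂ)
    (hfg : ∀ k k', ∑ a, f k a * starRingEnd ℂ (g k' a) = if k = k' then 1 else 0)
    (c c' : Fin d → ℂ) :
    ∑ a, (∑ k, c k * f k a) * starRingEnd ℂ (∑ k', c' k' * g k' a)
      = ∑ k, c k * starRingEnd ℂ (c' k) := by
  calc ∑ a, (∑ k, c k * f k a) * starRingEnd ℂ (∑ k', c' k' * g k' a)
      = ∑ a, ∑ k, ∑ k', (c k * f k a) * starRingEnd ℂ (c' k' * g k' a) := by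
        apply Finset.sum_congr rfl
        intro a _
        rw [map_sum, Finset.sum_mul_sum]
    _ = ∑ k, ∑ k', (c k * starRingEnd ℂ (c' k')) * ∑ a, f k a * starRingEnd ℂ (g k' a) := by
        rw [Finset.sum_comm]
        apply Finset.sum_congr rfl
        intro k _
        rw [Finset.sum_comm]
        apply Finset.sum_congr rfl
        intro k' _
        rw [Finset.mul_sum]
        apply Finset.sum_congr rfl
        intro a _
        rw [_root_.map_mul]
        ring
    _ = ∑ k, c k * starRingEnd ℂ (c' k) := by
        apply Finset.sum_congr rfl
        intro k _
        simp_rw [hfg k]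
        simp
lemma sum_prod_star {N : Type*} [Fintype N] (x y : N → ℂ) :
    ∑ rr : N × N, star (x rr.1 * y rr.2) * (x rr.1 * y rr.2)
      = (∑ i, star (x i) * x i) * (∑ i, star (y i) * y i) := by
  rw [Finset.sum_mul_sum, Fintype.sum_prod_type]
  apply Finset.sum_congr rfl
  intro i _
  apply Finset.sum_congr rfl
  intro j _
  simp only [star_mul']
  ring

end TraceNormHelpers

/-- Lemma 2(1): for a pure state in Schmidt form `|φ⟩ = ∑ᵢ √μᵢ |i_A i_B⟩`,
`‖M_{α,β}^l(|φ⟩⟨φ|)‖_tr ≤ √((lα²+1)(lβ²+1)) + 2 ∑_{i<j} √(μᵢ μⱼ)`. -/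
theorem traceNorm_Mblock_pure_le {dA dB d : ℕ} (hd : d = min dA dB)
    (μ : Fin d → ℝ) (hμ : ∀ i, 0 ≤ μ i) (hsum : ∑ i, μ i = 1)
    (u : Fin d → Fin dA → ℂ) (v : Fin d → Fin dB → ℂ)
    (hu : ∀ k k', ∑ i, starRingEnd ℂ (u k i) * u k' i = if k = k' then 1 else 0)
    (hv : ∀ k k', ∑ i, starRingEnd ℂ (v k i) * v k' i = if k = k' then 1 else 0)
    (φ : Fin dA × Fin dB → ℂ)
    (hφ : φ = fun x => ∑ k, (Real.sqrt (μ k) : ℂ) * u k x.1 * v k x.2)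
    (α β : ℝ) (l : ℕ) :
    traceNorm (Mblock α β l (Matrix.vecMulVec φ (star φ))) ≤
      Real.sqrt ((l * α ^ 2 + 1) * (l * β ^ 2 + 1)) +
        2 * ∑ p ∈ Finset.univ.filter (fun p : Fin d × Fin d => p.1 < p.2),
              Real.sqrt (μ p.1 * μ p.2) := by
  classical
  -- conjugated orthonormality
  have hu' : ∀ k k', ∑ a, u k a * starRingEnd ℂ (u k' a) = if k = k' then 1 else 0 := by
    intro k k'
    have h := congrArg (starRingEnd ℂ) (hu k k')
    rw [map_sum] at h
    simpa [_root_.map_mul, Complex.conj_conj, apply_ite] using h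
  have hv' : ∀ k k', ∑ b, v k b * starRingEnd ℂ (v k' b) = if k = k' then 1 else 0 := by
    intro k k'
    have h := congrArg (starRingEnd ℂ) (hv k k')
    rw [map_sum] at h
    simpa [_root_.map_mul, Complex.conj_conj, apply_ite] using h
  have hμc : ∑ k, (μ k : ℂ) = 1 := by exact_mod_cast congrArg Complex.ofReal hsum
  set av : Fin d → (Fin l ⊕ Fin dA × Fin dA) → ℂ :=
    fun k => Sum.elim (fun _ => (α : ℂ)) (fun r => starRingEnd ℂ (u k r.1) * u k r.2) with hav
  set bv : Fin d → (Fin l ⊕ Fin dB × Fin dB) → ℂ :=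
    fun k => Sum.elim (fun _ => (β : ℂ)) (fun c => starRingEnd ℂ (v k c.1) * v k c.2) with hbv
  set pv : Fin d × Fin d → (Fin l ⊕ Fin dA × Fin dA) → ℂ :=
    fun kk => Sum.elim (fun _ => (0:ℂ))
      (fun r => starRingEnd ℂ (u kk.2 r.1) * u kk.1 r.2) with hpv
  set qv : Fin d × Fin d → (Fin l ⊕ Fin dB × Fin dB) → ℂ :=
    fun kk => Sum.elim (fun _ => (0:ℂ))
      (fun c => starRingEnd ℂ (v kk.2 c.1) * v kk.1 c.2) with hqv
  -- partial-trace contractions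
  have keyA : ∀ b b' : Fin dB,
      ∑ a, φ (a, b) * starRingEnd ℂ (φ (a, b'))
        = ∑ k, (μ k : ℂ) * (v k b * starRingEnd ℂ (v k b')) := by
    intro b b'
    have h1 : ∀ (b0 : Fin dB) (a : Fin dA),
        φ (a, b0) = ∑ k, ((Real.sqrt (μ k) : ℂ) * v k b0) * u k a := by
      intro b0 a; rw [hφ]; exact Finset.sum_congr rfl fun k _ => by ring
    calc ∑ a, φ (a, b) * starRingEnd ℂ (φ (a, b'))
        = ∑ a, (∑ k, ((Real.sqrt (μ k) : ℂ) * v k b) * u k a)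
            * starRingEnd ℂ (∑ k', ((Real.sqrt (μ k') : ℂ) * v k' b') * u k' a) :=
          Finset.sum_congr rfl fun a _ => by rw [h1 b a, h1 b' a]
      _ = ∑ k, ((Real.sqrt (μ k) : ℂ) * v k b)
            * starRingEnd ℂ ((Real.sqrt (μ k) : ℂ) * v k b') := schmidt_contract u u hu' _ _
      _ = ∑ k, (μ k : ℂ) * (v k b * starRingEnd ℂ (v k b')) := by
          apply Finset.sum_congr rfl
          intro k _
          rw [_root_.map_mul, Complex.conj_ofReal,
            show ((Real.sqrt (μ k) : ℂ)) * v k b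
                * ((Real.sqrt (μ k) : ℂ) * starRingEnd ℂ (v k b'))
              = ((Real.sqrt (μ k) : ℂ) * (Real.sqrt (μ k) : ℂ))
                * (v k b * starRingEnd ℂ (v k b')) from by ring,
            ← Complex.ofReal_mul, Real.mul_self_sqrt (hμ k)]
  have keyB : ∀ a a' : Fin dA,
      ∑ b, φ (a, b) * starRingEnd ℂ (φ (a', b))
        = ∑ k, (μ k : ℂ) * (u k a * starRingEnd ℂ (u k a')) := by
    intro a a'
    have h1 : ∀ (a0 : Fin dA) (b : Fin dB),
        φ (a0, b) = ∑ k, ((Real.sqrt (μ k) : ℂ) * u k a0) * v k b := by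
      intro a0 b; rw [hφ]
    calc ∑ b, φ (a, b) * starRingEnd ℂ (φ (a', b))
        = ∑ b, (∑ k, ((Real.sqrt (μ k) : ℂ) * u k a) * v k b)
            * starRingEnd ℂ (∑ k', ((Real.sqrt (μ k') : ℂ) * u k' a') * v k' b) :=
          Finset.sum_congr rfl fun b _ => by rw [h1 a b, h1 a' b]
      _ = ∑ k, ((Real.sqrt (μ k) : ℂ) * u k a)
            * starRingEnd ℂ ((Real.sqrt (μ k) : ℂ) * u k a') := schmidt_contract v v hv' _ _
      _ = ∑ k, (μ k : ℂ) * (u k a * starRingEnd ℂ (u k a')) := by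
          apply Finset.sum_congr rfl
          intro k _
          rw [_root_.map_mul, Complex.conj_ofReal,
            show ((Real.sqrt (μ k) : ℂ)) * u k a
                * ((Real.sqrt (μ k) : ℂ) * starRingEnd ℂ (u k a'))
              = ((Real.sqrt (μ k) : ℂ) * (Real.sqrt (μ k) : ℂ))
                * (u k a * starRingEnd ℂ (u k a')) from by ring,
            ← Complex.ofReal_mul, Real.mul_self_sqrt (hμ k)]
  -- full expansion for the realignment block
  have hexp : ∀ (r : Fin dA × Fin dA) (cc : Fin dB × Fin dB),
      φ (r.2, cc.2) * starRingEnd ℂ (φ (r.1, cc.1))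
        = ∑ kk : Fin d × Fin d,
            ((Real.sqrt (μ kk.1 * μ kk.2) : ℝ) : ℂ)
              * (starRingEnd ℂ (u kk.2 r.1) * u kk.1 r.2)
              * (starRingEnd ℂ (v kk.2 cc.1) * v kk.1 cc.2) := by
    intro r cc
    simp only [hφ]
    rw [map_sum, Finset.sum_mul_sum, Fintype.sum_prod_type]
    apply Finset.sum_congr rfl
    intro k _
    apply Finset.sum_congr rfl
    intro k' _
    rw [_root_.map_mul, _root_.map_mul, Complex.conj_ofReal, Real.sqrt_mul (hμ k),
      Complex.ofReal_mul]
    ring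
  set ρ := Matrix.vecMulVec φ (star φ) with hρ
  -- the decomposition into rank-one pieces
  have hdecomp : Mblock α β l ρ
      = (∑ k, Matrix.vecMulVec ((μ k : ℂ) • av k) (bv k))
        + ∑ kk ∈ Finset.univ.filter (fun kk : Fin d × Fin d => kk.1 ≠ kk.2),
            Matrix.vecMulVec (((Real.sqrt (μ kk.1 * μ kk.2) : ℝ) : ℂ) • pv kk) (qv kk) := by
    ext i j
    rw [Matrix.add_apply, Matrix.sum_apply, Matrix.sum_apply]
    rcases i with s | r <;> rcases j with t | cc
    · simp only [Mblock, Matrix.fromBlocks_apply₁₁, Matrix.of_apply, hav, hbv, hpv, hqv,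
        Matrix.vecMulVec_apply, Pi.smul_apply, Sum.elim_inl, smul_eq_mul, mul_zero, zero_mul,
        Finset.sum_const_zero, add_zero]
      rw [← Finset.sum_mul, ← Finset.sum_mul, hμc, one_mul]
      push_cast
      ring
    · simp only [Mblock, Matrix.fromBlocks_apply₁₂, Matrix.of_apply, hav, hbv, hpv, hqv,
        Matrix.vecMulVec_apply, Pi.smul_apply, Sum.elim_inl, Sum.elim_inr, smul_eq_mul,
        mul_zero, zero_mul, Finset.sum_const_zero, add_zero]
      rw [show _root_.vec (ptrA ρ) cc = ∑ a, φ (a, cc.2) * starRingEnd ℂ (φ (a, cc.1)) from by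
        simp [_root_.vec, ptrA, hρ, Matrix.vecMulVec_apply, Complex.star_def]]
      rw [keyA cc.2 cc.1, Finset.mul_sum]
      apply Finset.sum_congr rfl
      intro k _
      ring
    · simp only [Mblock, Matrix.fromBlocks_apply₂₁, Matrix.of_apply, hav, hbv, hpv, hqv,
        Matrix.vecMulVec_apply, Pi.smul_apply, Sum.elim_inl, Sum.elim_inr, smul_eq_mul,
        mul_zero, zero_mul, Finset.sum_const_zero, add_zero]
      rw [show _root_.vec (ptrB ρ) r = ∑ b, φ (r.2, b) * starRingEnd ℂ (φ (r.1, b)) from by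
        simp [_root_.vec, ptrB, hρ, Matrix.vecMulVec_apply, Complex.star_def]]
      rw [keyB r.2 r.1, Finset.mul_sum]
      apply Finset.sum_congr rfl
      intro k _
      ring
    · simp only [Mblock, Matrix.fromBlocks_apply₂₂, Matrix.of_apply, hav, hbv, hpv, hqv,
        Matrix.vecMulVec_apply, Pi.smul_apply, Sum.elim_inr, smul_eq_mul]
      rw [show realign ρ r cc = φ (r.2, cc.2) * starRingEnd ℂ (φ (r.1, cc.1)) from by
        simp [realign, hρ, Matrix.vecMulVec_apply, Complex.star_def]]
      rw [hexp r cc,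
        ← Finset.sum_filter_add_sum_filter_not Finset.univ
          (fun kk : Fin d × Fin d => kk.1 = kk.2)]
      congr 1
      · apply Finset.sum_nbij' (i := fun kk : Fin d × Fin d => kk.1) (j := fun k => (k, k))
        · intro a _; exact Finset.mem_univ _
        · intro a _; simp
        · intro a ha
          simp only [Finset.mem_filter, Finset.mem_univ, true_and] at ha
          exact Prod.ext rfl ha
        · intro a _; rfl
        · intro a ha
          simp only [Finset.mem_filter, Finset.mem_univ, true_and] at ha
          rw [← ha, Real.sqrt_mul_self (hμ a.1)]
  -- Euclidean norms of the pieces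
  have hxx : ∀ k, (∑ i, star (starRingEnd ℂ (u k i)) * (starRingEnd ℂ (u k i))) = 1 := by
    intro k
    have h := hu' k k
    rw [if_pos rfl] at h
    rw [← h]
    apply Finset.sum_congr rfl
    intro i _
    rw [Complex.star_def, Complex.conj_conj]
  have hyy : ∀ k, (∑ i, star (u k i) * u k i) = 1 := by
    intro k
    have h := hu k k
    rw [if_pos rfl] at h
    rw [← h]
    apply Finset.sum_congr rfl
    intro i _
    rw [Complex.star_def]
  have hxxv : ∀ k, (∑ i, star (starRingEnd ℂ (v k i)) * (starRingEnd ℂ (v k i))) = 1 := by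
    intro k
    have h := hv' k k
    rw [if_pos rfl] at h
    rw [← h]
    apply Finset.sum_congr rfl
    intro i _
    rw [Complex.star_def, Complex.conj_conj]
  have hyyv : ∀ k, (∑ i, star (v k i) * v k i) = 1 := by
    intro k
    have h := hv k k
    rw [if_pos rfl] at h
    rw [← h]
    apply Finset.sum_congr rfl
    intro i _
    rw [Complex.star_def]
  have hl1 : (0:ℝ) ≤ (l:ℝ) * α ^ 2 + 1 := by positivity
  have hcnav : ∀ k, cn (av k) = Real.sqrt ((l:ℝ) * α ^ 2 + 1) := by
    intro k
    rw [cn_eq_sqrt_dot]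
    congr 1
    have e1 : dotProduct (star (av k)) (av k)
        = (((l:ℝ) * α ^ 2 + 1 : ℝ) : ℂ) := by
      simp only [dotProduct, Pi.star_apply, hav]
      rw [Fintype.sum_sum_type]
      simp only [Sum.elim_inl, Sum.elim_inr]
      rw [sum_prod_star (fun i => starRingEnd ℂ (u k i)) (u k), hxx k, hyy k, mul_one]
      simp only [Complex.star_def, Complex.conj_ofReal, Finset.sum_const, Finset.card_univ,
        Fintype.card_fin, nsmul_eq_mul]
      push_cast
      ring
    rw [e1, Complex.ofReal_re]
  have hcnbv : ∀ k, cn (bv k) = Real.sqrt ((l:ℝ) * β ^ 2 + 1) := by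
    intro k
    rw [cn_eq_sqrt_dot]
    congr 1
    have e1 : dotProduct (star (bv k)) (bv k)
        = (((l:ℝ) * β ^ 2 + 1 : ℝ) : ℂ) := by
      simp only [dotProduct, Pi.star_apply, hbv]
      rw [Fintype.sum_sum_type]
      simp only [Sum.elim_inl, Sum.elim_inr]
      rw [sum_prod_star (fun i => starRingEnd ℂ (v k i)) (v k), hxxv k, hyyv k, mul_one]
      simp only [Complex.star_def, Complex.conj_ofReal, Finset.sum_const, Finset.card_univ,
        Fintype.card_fin, nsmul_eq_mul]
      push_cast
      ring
    rw [e1, Complex.ofReal_re]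
  have hcnpv : ∀ kk : Fin d × Fin d, cn (pv kk) = 1 := by
    intro kk
    rw [cn_eq_sqrt_dot]
    have e1 : dotProduct (star (pv kk)) (pv kk) = (1 : ℂ) := by
      simp only [dotProduct, Pi.star_apply, hpv]
      rw [Fintype.sum_sum_type]
      simp only [Sum.elim_inl, Sum.elim_inr]
      rw [sum_prod_star (fun i => starRingEnd ℂ (u kk.2 i)) (u kk.1), hxx kk.2, hyy kk.1,
        mul_one]
      simp
    rw [e1]
    simp
  have hcnqv : ∀ kk : Fin d × Fin d, cn (qv kk) = 1 := by
    intro kk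
    rw [cn_eq_sqrt_dot]
    have e1 : dotProduct (star (qv kk)) (qv kk) = (1 : ℂ) := by
      simp only [dotProduct, Pi.star_apply, hqv]
      rw [Fintype.sum_sum_type]
      simp only [Sum.elim_inl, Sum.elim_inr]
      rw [sum_prod_star (fun i => starRingEnd ℂ (v kk.2 i)) (v kk.1), hxxv kk.2, hyyv kk.1,
        mul_one]
      simp
    rw [e1]
    simp
  -- putting it together
  have step1 : traceNorm (Mblock α β l ρ)
      ≤ (∑ k, traceNorm (Matrix.vecMulVec ((μ k : ℂ) • av k) (bv k)))
        + ∑ kk ∈ Finset.univ.filter (fun kk : Fin d × Fin d => kk.1 ≠ kk.2),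
            traceNorm
              (Matrix.vecMulVec (((Real.sqrt (μ kk.1 * μ kk.2) : ℝ) : ℂ) • pv kk) (qv kk)) := by
    rw [hdecomp]
    exact le_trans (traceNorm_add_le _ _)
      (add_le_add (traceNorm_sum_le _ _) (traceNorm_sum_le _ _))
  have hterm1 : ∀ k, traceNorm (Matrix.vecMulVec ((μ k : ℂ) • av k) (bv k))
      = μ k * (Real.sqrt ((l:ℝ) * α ^ 2 + 1) * Real.sqrt ((l:ℝ) * β ^ 2 + 1)) := by
    intro k
    rw [traceNorm_vecMulVec, cn_smul, hcnav k, hcnbv k, Complex.norm_real,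
      Real.norm_of_nonneg (hμ k)]
    ring
  have hsum1 : (∑ k, traceNorm (Matrix.vecMulVec ((μ k : ℂ) • av k) (bv k)))
      = Real.sqrt (((l:ℝ) * α ^ 2 + 1) * ((l:ℝ) * β ^ 2 + 1)) := by
    rw [Finset.sum_congr rfl (fun k _ => hterm1 k), ← Finset.sum_mul, hsum, one_mul,
      ← Real.sqrt_mul hl1]
  have hsum2 : (∑ kk ∈ Finset.univ.filter (fun kk : Fin d × Fin d => kk.1 ≠ kk.2),
        traceNorm
          (Matrix.vecMulVec (((Real.sqrt (μ kk.1 * μ kk.2) : ℝ) : ℂ) • pv kk) (qv kk)))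
      = ∑ kk ∈ Finset.univ.filter (fun kk : Fin d × Fin d => kk.1 ≠ kk.2),
          Real.sqrt (μ kk.1 * μ kk.2) := by
    apply Finset.sum_congr rfl
    intro kk _
    rw [traceNorm_vecMulVec, cn_smul, hcnpv kk, hcnqv kk, Complex.norm_real,
      Real.norm_of_nonneg (Real.sqrt_nonneg _)]
    ring
  have hsplit2 : (∑ kk ∈ Finset.univ.filter (fun kk : Fin d × Fin d => kk.1 ≠ kk.2),
        Real.sqrt (μ kk.1 * μ kk.2))
      = 2 * ∑ p ∈ Finset.univ.filter (fun p : Fin d × Fin d => p.1 < p.2),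
            Real.sqrt (μ p.1 * μ p.2) := by
    have h1 : Finset.univ.filter (fun kk : Fin d × Fin d => kk.1 ≠ kk.2)
        = Finset.univ.filter (fun kk : Fin d × Fin d => kk.1 < kk.2)
          ∪ Finset.univ.filter (fun kk : Fin d × Fin d => kk.2 < kk.1) := by
      ext kk
      simp only [Finset.mem_filter, Finset.mem_univ, true_and, Finset.mem_union]
      constructor
      · intro h
        rcases lt_or_gt_of_ne h with h' | h'
        · exact Or.inl h'
        · exact Or.inr h'
      · rintro (h | h)
        · exact ne_of_lt h
        · exact (ne_of_lt h).symm
    have h2 : Disjoint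
        (Finset.univ.filter (fun kk : Fin d × Fin d => kk.1 < kk.2))
        (Finset.univ.filter (fun kk : Fin d × Fin d => kk.2 < kk.1)) := by
      rw [Finset.disjoint_left]
      intro kk ha hb
      simp only [Finset.mem_filter, Finset.mem_univ, true_and] at ha hb
      exact absurd hb (not_lt_of_gt ha)
    have h3 : (∑ kk ∈ Finset.univ.filter (fun kk : Fin d × Fin d => kk.2 < kk.1),
          Real.sqrt (μ kk.1 * μ kk.2))
        = ∑ kk ∈ Finset.univ.filter (fun kk : Fin d × Fin d => kk.1 < kk.2),
            Real.sqrt (μ kk.1 * μ kk.2) := by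
      apply Finset.sum_nbij' (i := Prod.swap) (j := Prod.swap)
      · intro a ha
        simp only [Finset.mem_filter, Finset.mem_univ, true_and] at ha ⊢
        exact ha
      · intro a ha
        simp only [Finset.mem_filter, Finset.mem_univ, true_and] at ha ⊢
        exact ha
      · intro a _; simp
      · intro a _; simp
      · intro a _
        simp only [Prod.fst_swap, Prod.snd_swap]
        rw [mul_comm]
    rw [h1, Finset.sum_union h2, h3]
    ring
  calc traceNorm (Mblock α β l ρ)
      ≤ (∑ k, traceNorm (Matrix.vecMulVec ((μ k : ℂ) • av k) (bv k)))
        + ∑ kk ∈ Finset.univ.filter (fun kk : Fin d × Fin d => kk.1 ≠ kk.2),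
            traceNorm
              (Matrix.vecMulVec (((Real.sqrt (μ kk.1 * μ kk.2) : ℝ) : ℂ) • pv kk) (qv kk)) :=
        step1
    _ = Real.sqrt (((l:ℝ) * α ^ 2 + 1) * ((l:ℝ) * β ^ 2 + 1))
        + 2 * ∑ p ∈ Finset.univ.filter (fun p : Fin d × Fin d => p.1 < p.2),
            Real.sqrt (μ p.1 * μ p.2) := by
        rw [hsum1, hsum2, hsplit2]
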